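/- arXiv:2108.03369 — 2 statements merged into one kernel-verified Lean document; each statement's English description precedes it below -/
import Mathlib

section
/- Let P be an LPOD and let M be a consistent, solid, ⪯-minimal four-valued model of P. Then M is a three-valued answer set of P. -/
/-! Four truth values F < F* < T* < T. -/
inductive V4 : Type
  | F | Fs | Ts | T
  deriving DecidableEq, Repr

instance : Fintype V4 :=
  ⟨{V4.F, V4.Fs, V4.Ts, V4.T}, by intro x; cases x <;> simp⟩

namespace V4

def toNat : V4 → ℕ
  | F => 0
  | Fs => 1
  | Ts => 2
  | T => 3

theorem toNat_injective : Function.Injective toNat := by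
  intro a b h
  cases a <;> cases b <;> simp_all [toNat]

instance : LinearOrder V4 := LinearOrder.lift' toNat toNat_injective

instance : BoundedOrder V4 where
  top := T
  le_top a := by cases a <;> decide
  bot := F
  bot_le a := by cases a <;> decide

/-- Negation-as-failure: `not φ` is `T` if `φ ≤ F*`, else `F`. -/
def notv (a : V4) : V4 := if a ≤ Fs then T else F

/-- Ordered disjunction on truth values: `u × v = v` if `u = F*`, else `u`. -/
def times (a b : V4) : V4 := if a = Fs then b else a

end V4

variable {α : Type}

/-- A ground literal: an atom together with a polarity (`true` = the atom itself,
`false` = its strong negation). -/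
structure Lit (α : Type) where
  atom : α
  positive : Bool
  deriving DecidableEq

/-- A (four-valued) interpretation assigns a truth value to every literal.
Three-valued interpretations are the `solid` ones (no `T*` value). -/
abbrev Interp (α : Type) := Lit α → V4

/-- `I` is solid (equivalently, three-valued) if it assigns `T*` to no literal. -/
def solid (I : Interp α) : Prop := ∀ l, I l ≠ V4.Ts

/-- `I` is consistent: no atom has both the atom and its strong negation `T`. -/
def consistentI (I : Interp α) : Prop :=
  ∀ a : α, ¬ (I ⟨a, true⟩ = V4.T ∧ I ⟨a, false⟩ = V4.T)

/-- `I` takes values only in `{F, T}`. -/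
def twoValued (I : Interp α) : Prop := ∀ l, I l = V4.F ∨ I l = V4.T

/-- Value of the conjunction of a list of literals. -/
def evalConj (I : Interp α) (L : List (Lit α)) : V4 := (L.map I).foldr min V4.T

/-- Value of the conjunction `not B1 ∧ ⋯ ∧ not Bk`. -/
def evalNegs (I : Interp α) (L : List (Lit α)) : V4 :=
  (L.map (fun b => V4.notv (I b))).foldr min V4.T

/-- Value of the disjunction of a list of literals. -/
def evalDisj (I : Interp α) (L : List (Lit α)) : V4 := (L.map I).foldr max V4.F

/-- Value of an ordered disjunction of the given (nonempty) list of values.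
(`F*` is a right identity for `×`, so the fold computes `v1 × ⋯ × vn`.) -/
def evalOD (vs : List V4) : V4 := vs.foldr V4.times V4.Fs

/-- Pointwise `≤` on interpretations. -/
def interpLE (I J : Interp α) : Prop := ∀ l, I l ≤ J l

/-- The four-valued relation `⪯`: `u ⪯ v` iff `u = v` or `u ≺ v`, where
`F ≺ F*`, `F ≺ T*`, `F ≺ T` and `T* ≺ T`.  On three-valued (solid)
interpretations it restricts to the ordering generated by `F ≺ F*`, `F ≺ T`. -/
def preceq (u v : V4) : Prop :=
  u = v ∨ (u = V4.F ∧ v ≠ V4.F) ∨ (u = V4.Ts ∧ v = V4.T)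

/-- Pointwise `⪯` on interpretations. -/
def interpPreceq (I J : Interp α) : Prop := ∀ l, preceq (I l) (J l)

/-- The set of literals that are `T` in `I`. -/
def collapse (I : Interp α) : Set (Lit α) := { l | I l = V4.T }

/-! ### LPOD rules -/

/-- An LPOD rule `C1 × ⋯ × Cn ← A1,…,Am, not B1,…,not Bk` with head
`c1 :: cs` (so the head is nonempty). -/
structure Rule (α : Type) where
  c1 : Lit α
  cs : List (Lit α)
  pos : List (Lit α)
  neg : List (Lit α)

def Rule.headList (R : Rule α) : List (Lit α) := R.c1 :: R.cs

def Rule.headVal (R : Rule α) (I : Interp α) : V4 := evalOD (R.headList.map I)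

def Rule.bodyVal (R : Rule α) (I : Interp α) : V4 :=
  min (evalConj I R.pos) (evalNegs I R.neg)

/-- `I` satisfies the rule `R` (the rule evaluates to `T`). -/
def ruleSat (I : Interp α) (R : Rule α) : Prop := R.bodyVal I ≤ R.headVal I

/-- `I` is a model of the LPOD `P`. -/
def isModel (I : Interp α) (P : Set (Rule α)) : Prop := ∀ R ∈ P, ruleSat I R

/-! ### The ×-reduct of an LPOD -/

/-- A reduct rule `C ← [F*,] A1,…,Am`; `fstar` records whether the constant `F*`
occurs in the body. -/
structure RedRule (α : Type) where
  head : Lit α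
  pos : List (Lit α)
  fstar : Bool

def RedRule.bodyVal (r : RedRule α) (I : Interp α) : V4 :=
  min (if r.fstar then V4.Fs else V4.T) (evalConj I r.pos)

def redSat (I : Interp α) (r : RedRule α) : Prop := r.bodyVal I ≤ I r.head

def redModel (I : Interp α) (Q : Set (RedRule α)) : Prop := ∀ r ∈ Q, redSat I r

/-- Reduct rules generated by a head `C1,…,Cn`: rules `Cj ← F*, body` for
`j < r` and `Cr ← body`, where `r` is the least index with
`I C1 = ⋯ = I C_{r-1} = F*` and (`r = n` or `I Cr ≠ F*`). -/
def xredHead (I : Interp α) (body : List (Lit α)) : List (Lit α) → List (RedRule α)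
  | [] => []
  | [c] => [⟨c, body, false⟩]
  | c :: c' :: rest =>
    if I c = V4.Fs then ⟨c, body, true⟩ :: xredHead I body (c' :: rest)
    else [⟨c, body, false⟩]

/-- The ×-reduct of a rule w.r.t. `I`. -/
def xredRule (I : Interp α) (R : Rule α) : List (RedRule α) :=
  if ∃ b ∈ R.neg, I b = V4.T then [] else xredHead I R.pos R.headList

/-- The ×-reduct of an LPOD w.r.t. `I`. -/
def xreduct (I : Interp α) (P : Set (Rule α)) : Set (RedRule α) :=
  { r | ∃ R ∈ P, r ∈ xredRule I R }

/-- `M` is a three-valued answer set of the LPOD `P`: a consistent three-valued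
interpretation that is the `≤`-least (three-valued) model of `P^M_×`. -/
def threeAnswerSet (P : Set (Rule α)) (M : Interp α) : Prop :=
  solid M ∧ consistentI M ∧ redModel M (xreduct M P) ∧
  ∀ N : Interp α, solid N → redModel N (xreduct M P) → interpLE M N

/-! ### Two-valued notions: Brewka answer sets and GL answer sets -/

/-- A set of literals is consistent if it contains no complementary pair. -/
def twoConsistent (N : Set (Lit α)) : Prop :=
  ∀ a : α, ¬ (Lit.mk a true ∈ N ∧ Lit.mk a false ∈ N)

/-- `N` is a (two-valued) Brewka-model of the LPOD `P`. -/
def brewkaModel (N : Set (Lit α)) (P : Set (Rule α)) : Prop :=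
  ∀ R ∈ P, (∀ a ∈ R.pos, a ∈ N) → (∀ b ∈ R.neg, b ∉ N) → ∃ c ∈ R.headList, c ∈ N

/-- A positive rule `C ← A1,…,Am`. -/
structure PosRule (α : Type) where
  head : Lit α
  pos : List (Lit α)

/-- `N` is a two-valued model of a positive program. -/
def posModel (N : Set (Lit α)) (Q : Set (PosRule α)) : Prop :=
  ∀ r ∈ Q, (∀ a ∈ r.pos, a ∈ N) → r.head ∈ N

/-- The Brewka ×-reduct of an LPOD w.r.t. a set of literals `N`:
`Ci ← A1,…,Am` whenever `Ci ∈ N` and `N ∩ {C1,…,C_{i-1},B1,…,Bk} = ∅`. -/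
def brewkaReduct (N : Set (Lit α)) (P : Set (Rule α)) : Set (PosRule α) :=
  { r | ∃ R ∈ P, ∃ l1 l2 : List (Lit α),
      R.headList = l1 ++ r.head :: l2 ∧ r.pos = R.pos ∧ r.head ∈ N ∧
      (∀ c ∈ l1, c ∉ N) ∧ (∀ b ∈ R.neg, b ∉ N) }

/-- `N` is a Brewka answer set of the LPOD `P`. -/
def brewkaAnswerSet (P : Set (Rule α)) (N : Set (Lit α)) : Prop :=
  twoConsistent N ∧ brewkaModel N P ∧ posModel N (brewkaReduct N P) ∧
  ∀ N', posModel N' (brewkaReduct N P) → N ⊆ N'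

/-- The Gelfond–Lifschitz reduct of an extended logic program (an LPOD all
of whose rule heads are single literals) w.r.t. a set of literals `N`. -/
def glReduct (P : Set (Rule α)) (N : Set (Lit α)) : Set (PosRule α) :=
  { r | ∃ R ∈ P, (∀ b ∈ R.neg, b ∉ N) ∧ r.head = R.c1 ∧ r.pos = R.pos }

/-- `N` is a standard answer set of the extended logic program `P`: a consistent
set of literals that is the least model of `P^N`. -/
def stdAnswerSet (P : Set (Rule α)) (N : Set (Lit α)) : Prop :=
  twoConsistent N ∧ posModel N (glReduct P N) ∧
  ∀ N', posModel N' (glReduct P N) → N ⊆ N'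

/-! ### DLPODs -/

/-- A DLPOD rule `𝒞1 × ⋯ × 𝒞n ← A1,…,Am, not B1,…,not Bk`, where each `𝒞i`
is a disjunction of literals; the head is `c1 :: cs` (nonempty). -/
structure DRule (α : Type) where
  c1 : List (Lit α)
  cs : List (List (Lit α))
  pos : List (Lit α)
  neg : List (Lit α)

def DRule.headList (R : DRule α) : List (List (Lit α)) := R.c1 :: R.cs

def DRule.headVal (R : DRule α) (I : Interp α) : V4 :=
  evalOD (R.headList.map (evalDisj I))

def DRule.bodyVal (R : DRule α) (I : Interp α) : V4 :=
  min (evalConj I R.pos) (evalNegs I R.neg)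

def dRuleSat (I : Interp α) (R : DRule α) : Prop := R.bodyVal I ≤ R.headVal I

def isDModel (I : Interp α) (P : Set (DRule α)) : Prop := ∀ R ∈ P, dRuleSat I R

/-- A disjunctive reduct rule `𝒞 ← [F*,] A1,…,Am`. -/
structure DRedRule (α : Type) where
  head : List (Lit α)
  pos : List (Lit α)
  fstar : Bool

def DRedRule.bodyVal (r : DRedRule α) (I : Interp α) : V4 :=
  min (if r.fstar then V4.Fs else V4.T) (evalConj I r.pos)

def dredSat (I : Interp α) (r : DRedRule α) : Prop := r.bodyVal I ≤ evalDisj I r.head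

def dredModel (I : Interp α) (Q : Set (DRedRule α)) : Prop := ∀ r ∈ Q, dredSat I r

def dxredHead (I : Interp α) (body : List (Lit α)) :
    List (List (Lit α)) → List (DRedRule α)
  | [] => []
  | [c] => [⟨c, body, false⟩]
  | c :: c' :: rest =>
    if evalDisj I c = V4.Fs then ⟨c, body, true⟩ :: dxredHead I body (c' :: rest)
    else [⟨c, body, false⟩]

/-- The ×-reduct of a DLPOD rule w.r.t. `I`. -/
def dxredRule (I : Interp α) (R : DRule α) : List (DRedRule α) :=
  if ∃ b ∈ R.neg, I b = V4.T then [] else dxredHead I R.pos R.headList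

/-- The ×-reduct of a DLPOD w.r.t. `I`. -/
def dxreduct (I : Interp α) (P : Set (DRule α)) : Set (DRedRule α) :=
  { r | ∃ R ∈ P, r ∈ dxredRule I R }

/-- `M` is an answer set of the DLPOD `P`: a consistent three-valued
interpretation that is a `≤`-minimal (three-valued) model of `P^M_×`. -/
def dAnswerSet (P : Set (DRule α)) (M : Interp α) : Prop :=
  solid M ∧ consistentI M ∧ dredModel M (dxreduct M P) ∧
  ∀ N : Interp α, solid N → dredModel N (dxreduct M P) → interpLE N M → N = M

/-- A positive disjunctive rule `C1 ∨ ⋯ ∨ Cq ← A1,…,Am`. -/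
structure DPosRule (α : Type) where
  head : List (Lit α)
  pos : List (Lit α)

/-- `N` is a two-valued model of a positive disjunctive program. -/
def dposModel (N : Set (Lit α)) (Q : Set (DPosRule α)) : Prop :=
  ∀ r ∈ Q, (∀ a ∈ r.pos, a ∈ N) → ∃ c ∈ r.head, c ∈ N

/-- The Gelfond–Lifschitz reduct of a disjunctive extended logic program (a
DLPOD all of whose rule heads are single disjunctions). -/
def glDReduct (P : Set (DRule α)) (N : Set (Lit α)) : Set (DPosRule α) :=
  { r | ∃ R ∈ P, (∀ b ∈ R.neg, b ∉ N) ∧ r.head = R.c1 ∧ r.pos = R.pos }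

/-- `N` is a standard disjunctive answer set: a consistent set of literals that
is a minimal two-valued model of `P^N`. -/
def stdDAnswerSet (P : Set (DRule α)) (N : Set (Lit α)) : Prop :=
  twoConsistent N ∧ dposModel N (glDReduct P N) ∧
  ∀ N', dposModel N' (glDReduct P N) → N' ⊆ N → N' = N


/-! ### Auxiliary lemmas -/

section AuxStatement11

lemma vF_le (a : V4) : V4.F ≤ a := by cases a <;> decide

lemma v_le_T (a : V4) : a ≤ V4.T := by cases a <;> decide

lemma vFs_le_of_ne_F {a : V4} (h : a ≠ V4.F) : V4.Fs ≤ a := by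
  cases a
  · exact absurd rfl h
  · decide
  · decide
  · decide

lemma evalConj_nil (I : Interp α) : evalConj I [] = V4.T := rfl

lemma evalConj_cons (I : Interp α) (a : Lit α) (L : List (Lit α)) :
    evalConj I (a :: L) = min (I a) (evalConj I L) := rfl

lemma evalNegs_cons (I : Interp α) (b : Lit α) (L : List (Lit α)) :
    evalNegs I (b :: L) = min (V4.notv (I b)) (evalNegs I L) := rfl

lemma evalOD_nil : evalOD [] = V4.Fs := rfl

lemma evalOD_cons (v : V4) (vs : List V4) :
    evalOD (v :: vs) = V4.times v (evalOD vs) := rfl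

lemma le_evalConj {I : Interp α} {L : List (Lit α)} {v : V4} :
    v ≤ evalConj I L ↔ ∀ a ∈ L, v ≤ I a := by
  induction L with
  | nil => simp [evalConj_nil, v_le_T]
  | cons a L ih => rw [evalConj_cons, le_min_iff, ih]; simp

lemma evalConj_mono {I J : Interp α} {L : List (Lit α)} (h : ∀ a ∈ L, I a ≤ J a) :
    evalConj I L ≤ evalConj J L := by
  induction L with
  | nil => simp [evalConj_nil]
  | cons a L ih =>
    rw [evalConj_cons, evalConj_cons]
    exact min_le_min (h a (by simp)) (ih fun a ha => h a (by simp [ha]))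

lemma evalConj_eq_T {I : Interp α} {L : List (Lit α)} (h : evalConj I L = V4.T) :
    ∀ a ∈ L, I a = V4.T := by
  intro a ha
  exact le_antisymm (v_le_T _) (le_evalConj.mp (le_of_eq h.symm) a ha)

lemma evalConj_eq_T_of (I : Interp α) {L : List (Lit α)} (h : ∀ a ∈ L, I a = V4.T) :
    evalConj I L = V4.T :=
  le_antisymm (v_le_T _) (le_evalConj.mpr fun a ha => le_of_eq (h a ha).symm)

lemma evalNegs_eq_T {I : Interp α} {L : List (Lit α)} (h : ∀ b ∈ L, I b ≤ V4.Fs) :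
    evalNegs I L = V4.T := by
  induction L with
  | nil => rfl
  | cons b L ih =>
    rw [evalNegs_cons, ih fun b hb => h b (by simp [hb])]
    have hb : V4.notv (I b) = V4.T := if_pos (h b (by simp))
    simp [hb]

lemma evalNegs_le_F {I : Interp α} {L : List (Lit α)} {b : Lit α} (hb : b ∈ L)
    (h : ¬ I b ≤ V4.Fs) : evalNegs I L ≤ V4.F := by
  induction L with
  | nil => simp at hb
  | cons b' L ih =>
    rw [evalNegs_cons]
    rcases List.mem_cons.mp hb with h1 | h1
    · subst h1
      have hn : V4.notv (I b) = V4.F := if_neg h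
      exact le_trans (min_le_left _ _) (le_of_eq hn)
    · exact le_trans (min_le_right _ _) (ih h1)

lemma solid_le_Fs {M : Interp α} (hs : solid M) {b : Lit α} (h : M b ≠ V4.T) :
    M b ≤ V4.Fs := by
  have hts := hs b
  cases hb : M b
  · decide
  · decide
  · exact absurd hb hts
  · exact absurd hb h

lemma redSat_false_iff {N : Interp α} {c : Lit α} {pos : List (Lit α)} :
    redSat N ⟨c, pos, false⟩ ↔ evalConj N pos ≤ N c := by
  simp [redSat, RedRule.bodyVal, min_eq_right (v_le_T (evalConj N pos))]

lemma redSat_true_iff {N : Interp α} {c : Lit α} {pos : List (Lit α)} :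
    redSat N ⟨c, pos, true⟩ ↔ min V4.Fs (evalConj N pos) ≤ N c := by
  simp [redSat, RedRule.bodyVal]

/-- The central head induction. -/
lemma head_lemma (M N I : Interp α) (pos : List (Lit α)) (β : V4)
    (hsolid : solid M)
    (h1 : V4.Fs ≤ β)
    (h2 : β ≤ evalConj M pos)
    (h3 : β = V4.T → evalConj N pos = V4.T)
    (h5 : ∀ c, M c = V4.Fs → V4.Fs ≤ N c → I c = V4.Fs)
    (h5' : (∀ c, M c = V4.Fs → I c = V4.Fs) ∨ V4.Fs ≤ evalConj N pos)
    (h6 : ∀ c, M c = V4.T → V4.Ts ≤ I c)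
    (h7 : ∀ c, M c = V4.T → N c = V4.T → I c = V4.T) :
    ∀ hd : List (Lit α),
      evalConj M pos ≤ evalOD (hd.map M) →
      (∀ r ∈ xredHead M pos hd, redSat N r) →
      β ≤ evalOD (hd.map I) := by
  intro hd
  induction hd with
  | nil => intro h8 _; exact le_trans h2 h8
  | cons c tl ih =>
    intro h8 h9
    by_cases hc : M c = V4.Fs
    · have hNc : min V4.Fs (evalConj N pos) ≤ N c := by
        cases tl with
        | nil =>
          have hh := h9 ⟨c, pos, false⟩ (by simp [xredHead])
          exact le_trans (min_le_right _ _) (redSat_false_iff.mp hh)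
        | cons c' tl' =>
          have hh := h9 ⟨c, pos, true⟩ (by simp [xredHead, hc])
          exact redSat_true_iff.mp hh
      have hIc : I c = V4.Fs := by
        rcases h5' with h | h
        · exact h c hc
        · exact h5 c hc (by rwa [min_eq_left h] at hNc)
      rw [List.map_cons, evalOD_cons, hIc]
      have hod : V4.times V4.Fs (evalOD (tl.map I)) = evalOD (tl.map I) := by
        simp [V4.times]
      rw [hod]
      apply ih
      · simpa [List.map_cons, evalOD_cons, V4.times, hc] using h8
      · intro r hr
        apply h9
        cases tl with
        | nil => simp [xredHead] at hr
        | cons c' tl' =>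
          simp only [xredHead, if_pos hc]
          exact List.mem_cons_of_mem _ hr
    · have hmem : (⟨c, pos, false⟩ : RedRule α) ∈ xredHead M pos (c :: tl) := by
        cases tl with
        | nil => simp [xredHead]
        | cons c' tl' => simp [xredHead, hc]
      have hfr := redSat_false_iff.mp (h9 _ hmem)
      have h8' : evalConj M pos ≤ M c := by
        simpa [List.map_cons, evalOD_cons, V4.times, hc] using h8
      have hMc : M c = V4.F ∨ M c = V4.T := by
        have := hsolid c
        cases hmc : M c
        · exact Or.inl rfl
        · exact absurd hmc hc
        · exact absurd hmc (hsolid c)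
        · exact Or.inr rfl
      rcases hMc with hmc | hmc
      · exact absurd (le_trans h1 (le_trans h2 (hmc ▸ h8'))) (by decide)
      · have hI : V4.Ts ≤ I c := h6 c hmc
        have hIne : I c ≠ V4.Fs := by
          intro h; rw [h] at hI; exact absurd hI (by decide)
        rw [List.map_cons, evalOD_cons]
        have ht : V4.times (I c) (evalOD (tl.map I)) = I c := by
          simp [V4.times, hIne]
        rw [ht]
        by_cases hβT : β = V4.T
        · have hNT := h3 hβT
          have hNc : N c = V4.T :=
            le_antisymm (v_le_T _) (by rw [← hNT]; exact hfr)
          rw [h7 c hmc hNc, hβT]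
        · have hb : β ≤ V4.Ts := by
            cases β
            · decide
            · decide
            · decide
            · exact absurd rfl hβT
          exact le_trans hb hI

/-- `M` satisfies the reduct rules it generates. -/
lemma reduct_sat_self (M : Interp α) (pos : List (Lit α)) :
    ∀ hd : List (Lit α),
      evalConj M pos ≤ evalOD (hd.map M) →
      ∀ r ∈ xredHead M pos hd, redSat M r := by
  intro hd
  induction hd with
  | nil => intro _ r hr; simp [xredHead] at hr
  | cons c tl ih =>
    intro h8 r hr
    by_cases hc : M c = V4.Fs
    · cases tl with
      | nil =>
        simp only [xredHead, List.mem_singleton] at hr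
        subst hr
        refine redSat_false_iff.mpr ?_
        have hod : evalOD ([c].map M) = V4.Fs := by
          simp [List.map_cons, evalOD_cons, evalOD_nil, V4.times, hc]
        rw [hc, ← hod]
        exact h8
      | cons c' tl' =>
        rw [show xredHead M pos (c :: c' :: tl') =
            ⟨c, pos, true⟩ :: xredHead M pos (c' :: tl') from by
              simp [xredHead, hc]] at hr
        rcases List.mem_cons.mp hr with h | h
        · subst h
          refine redSat_true_iff.mpr ?_
          rw [hc]
          exact min_le_left _ _
        · apply ih _ _ h
          simpa [List.map_cons, evalOD_cons, V4.times, hc] using h8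
    · have hr' : r = ⟨c, pos, false⟩ := by
        cases tl with
        | nil => simpa [xredHead] using hr
        | cons c' tl' => simpa [xredHead, hc] using hr
      subst hr'
      refine redSat_false_iff.mpr ?_
      simpa [List.map_cons, evalOD_cons, V4.times, hc] using h8

lemma M_redModel (P : Set (Rule α)) (M : Interp α) (hs : solid M)
    (hm : isModel M P) : redModel M (xreduct M P) := by
  intro r hr
  obtain ⟨R, hR, hrr⟩ := hr
  rw [xredRule] at hrr
  split_ifs at hrr with hkill
  · simp at hrr
  · push_neg at hkill
    have hMFs : ∀ b ∈ R.neg, M b ≤ V4.Fs := fun b hb => solid_le_Fs hs (hkill b hb)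
    have hnegs : evalNegs M R.neg = V4.T := evalNegs_eq_T hMFs
    have h8 : evalConj M R.pos ≤ evalOD (R.headList.map M) := by
      have hrs := hm R hR
      rw [ruleSat, Rule.bodyVal, hnegs, min_eq_left (v_le_T _)] at hrs
      simpa [Rule.headVal] using hrs
    exact reduct_sat_self M R.pos R.headList h8 r hrr

lemma phase1 (P : Set (Rule α)) (M : Interp α) (hs : solid M) (hm : isModel M P)
    (hmin : ∀ N : Interp α, isModel N P → interpPreceq N M → N = M)
    (N : Interp α) (hNm : redModel N (xreduct M P)) :
    ∀ l, M l = V4.T → N l = V4.T := by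
  set J : Interp α :=
    fun l => if M l = V4.T then (if N l = V4.T then V4.T else V4.Ts) else M l
    with hJdef
  have hJle : ∀ l, J l ≤ M l := by
    intro l
    simp only [hJdef]
    split_ifs with h1 h2
    · rw [h1]
    · rw [h1]; decide
    · exact le_rfl
  have h5l : ∀ c, M c = V4.Fs → J c = V4.Fs := by
    intro c hcFs; simp only [hJdef]; simp [hcFs]
  have h6 : ∀ c, M c = V4.T → V4.Ts ≤ J c := by
    intro c h; simp only [hJdef]; simp only [if_pos h]
    split <;> decide
  have h7 : ∀ c, M c = V4.T → N c = V4.T → J c = V4.T := by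
    intro c h h'; simp only [hJdef]; simp [h, h']
  have hJT : ∀ l, J l = V4.T → (M l = V4.T ∧ N l = V4.T) := by
    intro l hl
    simp only [hJdef] at hl
    split_ifs at hl with hA hB
    · exact ⟨hA, hB⟩
    all_goals simp_all
  have hJmodel : isModel J P := by
    intro R hR
    rw [ruleSat, Rule.bodyVal]
    by_cases hkill : ∃ b ∈ R.neg, M b = V4.T
    · obtain ⟨b, hb, hbT⟩ := hkill
      have hnb : ¬ J b ≤ V4.Fs := by
        simp only [hJdef]
        rw [if_pos hbT]
        split <;> decide
      have hn := evalNegs_le_F hb hnb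
      exact le_trans (le_trans (min_le_right _ _) hn) (vF_le _)
    · have hkill2 := hkill
      push_neg at hkill2
      have hMFs : ∀ b ∈ R.neg, M b ≤ V4.Fs := fun b hb => solid_le_Fs hs (hkill2 b hb)
      have hnegs : evalNegs J R.neg = V4.T := by
        refine evalNegs_eq_T fun b hb => ?_
        have h1 := hMFs b hb
        have hJb : J b = M b := by
          simp only [hJdef]
          rw [if_neg (hkill2 b hb)]
        rw [hJb]; exact h1
      rw [hnegs, min_eq_left (v_le_T _)]
      by_cases hβF : evalConj J R.pos = V4.F
      · rw [hβF]; exact vF_le _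
      · have h1 : V4.Fs ≤ evalConj J R.pos := vFs_le_of_ne_F hβF
        have h2 : evalConj J R.pos ≤ evalConj M R.pos :=
          evalConj_mono fun a _ => hJle a
        have h3 : evalConj J R.pos = V4.T → evalConj N R.pos = V4.T := by
          intro hT
          exact evalConj_eq_T_of N fun a ha => (hJT a (evalConj_eq_T hT a ha)).2
        have h8 : evalConj M R.pos ≤ evalOD (R.headList.map M) := by
          have hrs := hm R hR
          rw [ruleSat, Rule.bodyVal, evalNegs_eq_T hMFs, min_eq_left (v_le_T _)] at hrs
          simpa [Rule.headVal] using hrs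
        have h9 : ∀ r ∈ xredHead M R.pos R.headList, redSat N r := by
          intro r hr
          exact hNm r ⟨R, hR, by rw [xredRule, if_neg hkill]; exact hr⟩
        have := head_lemma M N J R.pos (evalConj J R.pos) hs h1 h2 h3
          (fun c hc _ => h5l c hc) (Or.inl h5l) h6 h7 R.headList h8 h9
        simpa [Rule.headVal] using this
  have hJprec : interpPreceq J M := by
    intro l
    by_cases h : M l = V4.T
    · by_cases h2 : N l = V4.T
      · have : J l = M l := by simp only [hJdef]; simp [h, h2]
        exact Or.inl this
      · have : J l = V4.Ts := by simp only [hJdef]; simp [h, h2]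
        exact Or.inr (Or.inr ⟨this, h⟩)
    · have : J l = M l := by simp only [hJdef]; simp [h]
      exact Or.inl this
  have hJM := hmin J hJmodel hJprec
  intro l hl
  by_contra hNl
  have h1 : J l = V4.Ts := by simp only [hJdef]; simp [hl, hNl]
  rw [hJM, hl] at h1
  exact absurd h1 (by decide)

lemma phase2 (P : Set (Rule α)) (M : Interp α) (hs : solid M) (hm : isModel M P)
    (hmin : ∀ N : Interp α, isModel N P → interpPreceq N M → N = M)
    (N : Interp α) (hNs : solid N) (hNm : redModel N (xreduct M P))
    (hMT : ∀ l, M l = V4.T → N l = V4.T) : interpLE M N := by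
  set J : Interp α := fun l => min (M l) (N l) with hJdef
  have hJle : ∀ l, J l ≤ M l := fun l => min_le_left _ _
  have hJleN : ∀ l, J l ≤ N l := fun l => min_le_right _ _
  have hJmodel : isModel J P := by
    intro R hR
    rw [ruleSat, Rule.bodyVal]
    by_cases hkill : ∃ b ∈ R.neg, M b = V4.T
    · obtain ⟨b, hb, hbT⟩ := hkill
      have hnb : ¬ J b ≤ V4.Fs := by
        simp only [hJdef]
        rw [hbT, hMT b hbT]
        decide
      have hn := evalNegs_le_F hb hnb
      exact le_trans (le_trans (min_le_right _ _) hn) (vF_le _)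
    · have hkill2 := hkill
      push_neg at hkill2
      have hMFs : ∀ b ∈ R.neg, M b ≤ V4.Fs := fun b hb => solid_le_Fs hs (hkill2 b hb)
      have hnegs : evalNegs J R.neg = V4.T :=
        evalNegs_eq_T fun b hb => le_trans (hJle b) (hMFs b hb)
      rw [hnegs, min_eq_left (v_le_T _)]
      by_cases hβF : evalConj J R.pos = V4.F
      · rw [hβF]; exact vF_le _
      · have h1 : V4.Fs ≤ evalConj J R.pos := vFs_le_of_ne_F hβF
        have h2 : evalConj J R.pos ≤ evalConj M R.pos :=
          evalConj_mono fun a _ => hJle a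
        have h2N : evalConj J R.pos ≤ evalConj N R.pos :=
          evalConj_mono fun a _ => hJleN a
        have h3 : evalConj J R.pos = V4.T → evalConj N R.pos = V4.T := by
          intro hT
          exact le_antisymm (v_le_T _) (by rw [← hT]; exact h2N)
        have h5 : ∀ c, M c = V4.Fs → V4.Fs ≤ N c → J c = V4.Fs := by
          intro c hc hNc
          simp only [hJdef]
          rw [hc, min_eq_left hNc]
        have h6 : ∀ c, M c = V4.T → V4.Ts ≤ J c := by
          intro c hc
          simp only [hJdef]
          rw [hc, hMT c hc]
          decide
        have h7 : ∀ c, M c = V4.T → N c = V4.T → J c = V4.T := by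
          intro c hc hNc
          simp only [hJdef]
          rw [hc, hNc]
          decide
        have h8 : evalConj M R.pos ≤ evalOD (R.headList.map M) := by
          have hrs := hm R hR
          rw [ruleSat, Rule.bodyVal, evalNegs_eq_T hMFs, min_eq_left (v_le_T _)] at hrs
          simpa [Rule.headVal] using hrs
        have h9 : ∀ r ∈ xredHead M R.pos R.headList, redSat N r := by
          intro r hr
          exact hNm r ⟨R, hR, by rw [xredRule, if_neg hkill]; exact hr⟩
        have := head_lemma M N J R.pos (evalConj J R.pos) hs h1 h2 h3 h5
          (Or.inr (le_trans h1 h2N)) h6 h7 R.headList h8 h9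
        simpa [Rule.headVal] using this
  have hJprec : interpPreceq J M := by
    intro l
    have hMl := hs l
    have hNl := hNs l
    cases hm1 : M l with
    | F =>
      exact Or.inl (by simp only [hJdef]; rw [hm1]; exact min_eq_left (vF_le _))
    | Fs =>
      cases hn1 : N l with
      | F =>
        exact Or.inr (Or.inl ⟨by simp only [hJdef]; rw [hm1, hn1]; decide,
          by decide⟩)
      | Fs => exact Or.inl (by simp only [hJdef]; rw [hm1, hn1]; decide)
      | Ts => exact absurd hn1 hNl
      | T => exact Or.inl (by simp only [hJdef]; rw [hm1, hn1]; decide)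
    | Ts => exact absurd hm1 hMl
    | T =>
      have hn1 := hMT l hm1
      exact Or.inl (by simp only [hJdef]; rw [hm1, hn1]; decide)
  have hJM := hmin J hJmodel hJprec
  intro l
  have h1 : min (M l) (N l) = M l := by
    have := congrFun hJM l
    simpa [hJdef] using this
  exact min_eq_left_iff.mp h1

end AuxStatement11

/-- Every consistent, solid, `⪯`-minimal four-valued model of
an LPOD `P` is a three-valued answer set of `P`. -/
theorem minimal_solid_implies_threeAnswerSet {α : Type} (P : Set (Rule α))
    (M : Interp α) (hc : consistentI M) (hs : solid M) (hm : isModel M P)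
    (hmin : ∀ N : Interp α, isModel N P → interpPreceq N M → N = M) :
    threeAnswerSet P M := by
  refine ⟨hs, hc, M_redModel P M hs hm, ?_⟩
  intro N hNs hNm
  exact phase2 P M hs hm hmin N hNs hNm (phase1 P M hs hm hmin N hNm)
end

section
/- Let P be a DLPOD and let M be an answer set of P. Then M is a (three-valued) model of P. -/
variable {α : Type}

lemma foldr_min_le {β : Type} (f : β → V4) (L : List β) {x : β} (hx : x ∈ L) :
    (L.map f).foldr min V4.T ≤ f x := by
  induction L with
  | nil => cases hx
  | cons a t ih =>
    rcases List.mem_cons.mp hx with rfl | hx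
    · exact min_le_left _ _
    · exact le_trans (min_le_right _ _) (ih hx)

lemma dxredHead_le (M : Interp α) (body : List (Lit α)) :
    ∀ L : List (List (Lit α)), L ≠ [] →
      (∀ r ∈ dxredHead M body L, dredSat M r) →
      evalConj M body ≤ evalOD (L.map (evalDisj M))
  | [], h, _ => absurd rfl h
  | [c], _, hs => by
      have := hs ⟨c, body, false⟩ (by simp [dxredHead])
      simp only [dredSat, DRedRule.bodyVal, if_neg (by simp : ¬ false = true)] at this
      have hod : evalOD [evalDisj M c] = evalDisj M c := by
        by_cases hc : evalDisj M c = V4.Fs <;> simp [evalOD, V4.times, hc]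
      rw [List.map_singleton, hod]
      exact le_trans (le_min le_top le_rfl) this
  | c :: c' :: rest, _, hs => by
      by_cases hc : evalDisj M c = V4.Fs
      · have ih := dxredHead_le M body (c' :: rest) (by simp)
          (fun r hr => hs r (by simp [dxredHead, hc, hr]))
        simpa [evalOD, V4.times, hc] using ih
      · have := hs ⟨c, body, false⟩ (by simp [dxredHead, hc])
        simp only [dredSat, DRedRule.bodyVal, if_neg (by simp : ¬ false = true)] at this
        simpa [evalOD, V4.times, hc] using le_trans (le_min le_top le_rfl) this

/-- Every answer set of a DLPOD is a three-valued model of it. -/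
theorem dAnswerSet_isDModel {α : Type} (P : Set (DRule α)) (M : Interp α)
    (h : dAnswerSet P M) : isDModel M P := by
  obtain ⟨_, _, hred, _⟩ := h
  intro R hR
  by_cases hneg : ∃ b ∈ R.neg, M b = V4.T
  · obtain ⟨b, hb, hbT⟩ := hneg
    have h1 : evalNegs M R.neg ≤ V4.notv (M b) := foldr_min_le _ _ hb
    have h2 : V4.notv (M b) = V4.F := by simp [V4.notv, hbT]; decide
    have : R.bodyVal M ≤ V4.F := by
      rw [← h2]; exact le_trans (min_le_right _ _) h1
    exact le_trans this (by exact bot_le)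
  · have hs : ∀ r ∈ dxredHead M R.pos R.headList, dredSat M r := by
      intro r hr
      exact hred r ⟨R, hR, by simp [dxredRule, hneg, hr]⟩
    have := dxredHead_le M R.pos R.headList (by simp [DRule.headList]) hs
    exact le_trans (min_le_left _ _) this
end
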